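/- If (μ⁺)' = μ' with one part of size μ_n removed and one part of size μ_{n-1}+1 added, i.e., (μ⁺)'_i = μ'_i - [i = μ_n] + [i = μ_{n-1}+1] for all i, then the conjugate of the sorted rearrangement μ⁺ of (μ₁,...,μ_{n-2}, μ_{n-1}+1, μ_n-1) indeed satisfies this formula, for any partition μ of length n ≥ 2 with μ_n > 0. -/

import Mathlib

/-- Sort a list of naturals into weakly decreasing order. -/
def sortDesc (l : List ℕ) : List ℕ := l.mergeSort (fun a b => decide (b ≤ a))

theorem stmt_13 (l : List ℕ) (a b : ℕ)
    (hsort : List.Pairwise (· ≥ ·) (l ++ [a, b]))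
    (hpos : ∀ x ∈ l ++ [a, b], 0 < x) :
    ∀ i : ℕ, 1 ≤ i →
      (l ++ [a, b]).countP (fun x => decide (i ≤ x)) + (if i = a + 1 then 1 else 0)
        = (sortDesc (l ++ [a + 1, b - 1])).countP (fun x => decide (i ≤ x))
            + (if i = b then 1 else 0) := by
  intro i hi
  have hb : 0 < b := hpos b (by simp)
  have hperm : (sortDesc (l ++ [a + 1, b - 1])).countP (fun x => decide (i ≤ x))
      = (l ++ [a + 1, b - 1]).countP (fun x => decide (i ≤ x)) :=
    (List.mergeSort_perm _ _).countP_eq _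
  rw [hperm]
  simp only [List.countP_append, List.countP_cons, List.countP_nil, decide_eq_true_eq]
  split_ifs <;> omega
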